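/- The map σ ↦ π(σ) is an order isomorphism from the noncrossing partition lattice NC_n onto the set {x ∈ S_n : x ≤ c} of permutations below the n-cycle c = (1, 2, …, n) in absolute order; that is, π is injective, its image is exactly {x ∈ S_n : x ≤ c}, and for all noncrossing partitions σ, τ of [n] one has σ ≤ τ in NC_n if and only if π(σ) ≤ π(τ) in absolute order. -/

import Mathlib

set_option maxHeartbeats 1600000

/-- A partition of `[n]` (encoded as an equivalence relation / setoid on `Fin n`)
is *noncrossing* if there are no elements `a < b < c < d` with `a` and `c` in one
block and `b` and `d` in a different block. -/
def IsNoncrossing {n : ℕ} (σ : Setoid (Fin n)) : Prop :=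
  ∀ a b c d : Fin n, a < b → b < c → c < d → σ a c → σ b d → σ a b

/-- The noncrossing partition lattice `NC_n`, ordered by refinement. -/
abbrev NC (n : ℕ) := {σ : Setoid (Fin n) // IsNoncrossing σ}

/-- `p` is the permutation `π(σ)` associated to the partition `σ`: each block of `σ`
is a cycle of `p`, cycled in increasing order.  Concretely, for every `x`: `p x` lies
in the block of `x`; if some element of the block is larger than `x`, then `p x` is
the least such element; and if `x` is the largest element of its block, then `p x` is
the least element of the block. -/
def IsPiPerm {n : ℕ} (σ : Setoid (Fin n)) (p : Equiv.Perm (Fin n)) : Prop :=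
  ∀ x : Fin n,
    σ x (p x) ∧
    ((∃ y, σ x y ∧ x < y) → (x < p x ∧ ∀ y, σ x y → x < y → p x ≤ y)) ∧
    ((∀ y, σ x y → y ≤ x) → ∀ y, σ x y → p x ≤ y)

/-- `ℓ(x)`: the least `k` such that `x` is a product of `k` transpositions. -/
noncomputable def reflLength {n : ℕ} (x : Equiv.Perm (Fin n)) : ℕ :=
  sInf {k | ∃ l : List (Equiv.Perm (Fin n)),
    (∀ t ∈ l, t.IsSwap) ∧ l.prod = x ∧ l.length = k}

/-- Absolute order on `S_n`: `x ≤ y` iff `ℓ(x) + ℓ(x⁻¹y) = ℓ(y)`. -/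
def AbsoluteLe {n : ℕ} (x y : Equiv.Perm (Fin n)) : Prop :=
  reflLength x + reflLength (x⁻¹ * y) = reflLength y


namespace NCaux

open Equiv Equiv.Perm

/-- Top setoid relates everything. -/
lemma topRel {α : Type*} (x y : α) : (⊤ : Setoid α) x y := by
  rw [show ⇑(⊤ : Setoid α) = ⊤ from Setoid.top_def]; trivial

section counting
variable {α : Type*} [Fintype α]

/-- Coarser setoids have fewer classes. -/
lemma card_quot_le_of_le {r s : Setoid α} (h : r ≤ s) :
    Nat.card (Quotient s) ≤ Nat.card (Quotient r) := by
  classical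
  have hf : Function.Surjective (Quotient.map' (s₁ := r) (s₂ := s) id (fun a b hab => h hab)) := by
    intro q; induction q using Quotient.inductionOn' with
    | h z => exact ⟨Quotient.mk'' z, rfl⟩
  simpa [Nat.card_eq_fintype_card] using Fintype.card_le_of_surjective _ hf

lemma card_quot_lt {r s : Setoid α} (h : r ≤ s) {a b : α} (hab : ¬ r a b) (hs : s a b) :
    Nat.card (Quotient s) < Nat.card (Quotient r) := by
  classical
  set f := Quotient.map' (s₁ := r) (s₂ := s) id (fun a b hab => h hab) with hfdef
  have hf : Function.Surjective f := by
    intro q; induction q using Quotient.inductionOn' with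
    | h z => exact ⟨Quotient.mk'' z, rfl⟩
  have hni : ¬ Function.Injective f := by
    intro hinj
    have h1 : f (Quotient.mk'' a) = f (Quotient.mk'' b) := by
      simp only [hfdef, Quotient.map'_mk'', id]
      exact Quotient.sound' hs
    exact hab (Quotient.exact' (hinj h1))
  simpa [Nat.card_eq_fintype_card] using
    Fintype.card_lt_of_surjective_not_injective f hf hni

/-- Merging (at most) one pair of classes drops the class count by at most one. -/
lemma card_quot_le_add_one {r s : Setoid α} (h : r ≤ s) {a b : α}
    (htri : ∀ z w, s z w → r z w ∨ (r z a ∧ r w b) ∨ (r z b ∧ r w a)) :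
    Nat.card (Quotient r) ≤ Nat.card (Quotient s) + 1 := by
  classical
  set f := Quotient.map' (s₁ := r) (s₂ := s) id (fun a b hab => h hab) with hfdef
  set g : Quotient r → Quotient s ⊕ PUnit.{1} := fun q =>
    if q = Quotient.mk'' b then Sum.inr PUnit.unit else Sum.inl (f q) with hgdef
  have hginj : Function.Injective g := by
    intro q1 q2 hq
    induction q1 using Quotient.inductionOn' with
    | h z =>
    induction q2 using Quotient.inductionOn' with
    | h w =>
    by_cases h1 : Quotient.mk'' z = (Quotient.mk'' b : Quotient r) <;>
      by_cases h2 : Quotient.mk'' w = (Quotient.mk'' b : Quotient r)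
    · rw [h1, h2]
    · simp only [hgdef, if_pos h1, if_neg h2, reduceCtorEq] at hq
    · simp only [hgdef, if_pos h2, if_neg h1, reduceCtorEq] at hq
    · simp only [hgdef, if_neg h1, if_neg h2, Sum.inl.injEq] at hq
      have hsz : s z w := by
        have h3 : f (Quotient.mk'' z) = f (Quotient.mk'' w) := hq
        simp only [hfdef, Quotient.map'_mk'', id] at h3
        exact Quotient.exact' h3
      rcases htri z w hsz with hzw | ⟨_, hwb⟩ | ⟨hzb, _⟩
      · exact Quotient.sound' hzw
      · exact absurd (Quotient.sound' hwb) h2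
      · exact absurd (Quotient.sound' hzb) h1
  have := Fintype.card_le_of_injective g hginj
  simpa [Nat.card_eq_fintype_card] using this

lemma card_quot_le_card (r : Setoid α) : Nat.card (Quotient r) ≤ Nat.card α := by
  classical
  simpa [Nat.card_eq_fintype_card] using
    Fintype.card_le_of_surjective (Quotient.mk'' (s₁ := r)) (fun q => Quotient.exists_rep q)

end counting



variable {n : ℕ}

/-- The setoid of being in the same cycle. -/
def scS (x : Perm (Fin n)) : Setoid (Fin n) :=
  ⟨x.SameCycle, ⟨SameCycle.refl x, SameCycle.symm, SameCycle.trans⟩⟩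

lemma scS_rel {x : Perm (Fin n)} {z w : Fin n} : scS x z w ↔ x.SameCycle z w := Iff.rfl

/-- Number of orbits (cycles, incl. fixed points). -/
noncomputable def orb (x : Perm (Fin n)) : ℕ := Nat.card (Quotient (scS x))

/-- If `r` is closed under applying `v`, then it contains the same-cycle relation of `v`. -/
lemma sameCycle_implies {v : Perm (Fin n)} {r : Setoid (Fin n)} (h : ∀ z, r z (v z)) :
    ∀ {z w}, v.SameCycle z w → r z w := by
  intro z w hzw
  obtain ⟨i, hilt, hi⟩ := hzw.exists_pow_eq'
  subst hi
  clear hilt hzw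
  induction i with
  | zero => simpa using r.refl' z
  | succ k ih =>
      have h1 : (v ^ (k+1)) z = v ((v ^ k) z) := by
        rw [pow_succ' v k]; rfl
      rw [h1]
      exact r.trans' ih (h ((v ^ k) z))

lemma sameCycle_apply_self (x : Perm (Fin n)) (z : Fin n) : x.SameCycle z (x z) :=
  ⟨1, by simp⟩

/-- Multiplying by a swap of elements of different cycles joins those cycles. -/
lemma sameCycle_mul_swap {u : Perm (Fin n)} {a b : Fin n} (hab : a ≠ b)
    (h : ¬ u.SameCycle a b) : (u * Equiv.swap a b).SameCycle a b := by
  set v := u * Equiv.swap a b with hv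
  have hva : v a = u b := by rw [hv]; simp [Equiv.Perm.mul_apply]
  have hvz : ∀ z, z ≠ a → z ≠ b → v z = u z := by
    intro z h1 h2; rw [hv]; simp [Equiv.Perm.mul_apply, Equiv.swap_apply_of_ne_of_ne h1 h2]
  have hex : ∃ j, 0 < j ∧ (u ^ j) b = b := by
    refine ⟨orderOf u, ?_, ?_⟩
    · exact orderOf_pos u
    · rw [pow_orderOf_eq_one]; rfl
  classical
  set m := Nat.find hex with hm
  obtain ⟨hm0, hmb⟩ : 0 < m ∧ (u ^ m) b = b := Nat.find_spec hex
  have hnb : ∀ j, 0 < j → j < m → (u ^ j) b ≠ b := by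
    intro j hj0 hjm hjb
    exact Nat.find_min hex hjm ⟨hj0, hjb⟩
  have hna : ∀ j : ℕ, (u ^ j) b ≠ a := by
    intro j hja
    exact h (SameCycle.symm ⟨(j : ℤ), by rw [zpow_natCast]; exact hja⟩)
  have key : ∀ j, 0 < j → j ≤ m → (v ^ j) a = (u ^ j) b := by
    intro j hj0 hjm
    induction j with
    | zero => omega
    | succ k ih =>
        rcases Nat.eq_zero_or_pos k with hk | hk
        · subst hk; simpa using hva
        · have h1 : (v ^ (k+1)) a = v ((v ^ k) a) := by rw [pow_succ' v k]; rfl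
          have h2 : (u ^ (k+1)) b = u ((u ^ k) b) := by rw [pow_succ' u k]; rfl
          rw [h1, ih hk (by omega), hvz _ (hna k) (hnb k hk (by omega)), h2]
  exact ⟨(m : ℤ), by rw [zpow_natCast, key m hm0 le_rfl, hmb]⟩

lemma scS_le_of_sameCycle {u : Perm (Fin n)} {a b : Fin n} (h : u.SameCycle a b) :
    scS (u * Equiv.swap a b) ≤ scS u := by
  intro z w hzw
  refine sameCycle_implies (r := scS u) ?_ hzw
  intro z
  rcases eq_or_ne z a with rfl | hza
  · show u.SameCycle z ((u * Equiv.swap z b) z)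
    have : (u * Equiv.swap z b) z = u b := by simp [Equiv.Perm.mul_apply]
    rw [this]
    exact h.trans (sameCycle_apply_self u b)
  rcases eq_or_ne z b with rfl | hzb
  · show u.SameCycle z ((u * Equiv.swap a z) z)
    have : (u * Equiv.swap a z) z = u a := by simp [Equiv.Perm.mul_apply]
    rw [this]
    exact h.symm.trans (sameCycle_apply_self u a)
  · show u.SameCycle z ((u * Equiv.swap a b) z)
    have : (u * Equiv.swap a b) z = u z := by
      simp [Equiv.Perm.mul_apply, Equiv.swap_apply_of_ne_of_ne hza hzb]
    rw [this]
    exact sameCycle_apply_self u z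

lemma scS_le_of_not_sameCycle {u : Perm (Fin n)} {a b : Fin n} (hab : a ≠ b)
    (h : ¬ u.SameCycle a b) : scS u ≤ scS (u * Equiv.swap a b) := by
  set v := u * Equiv.swap a b with hv
  have hsc : v.SameCycle a b := sameCycle_mul_swap hab h
  intro z w hzw
  refine sameCycle_implies (r := scS v) ?_ hzw
  intro z
  show v.SameCycle z (u z)
  rcases eq_or_ne z a with rfl | hza
  · have h1 : u z = v b := by rw [hv]; simp [Equiv.Perm.mul_apply]
    rw [h1]
    exact hsc.trans (sameCycle_apply_self v b)
  rcases eq_or_ne z b with rfl | hzb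
  · have h1 : u z = v a := by rw [hv]; simp [Equiv.Perm.mul_apply]
    rw [h1]
    exact hsc.symm.trans (sameCycle_apply_self v a)
  · have h1 : u z = v z := by
      rw [hv]; simp [Equiv.Perm.mul_apply, Equiv.swap_apply_of_ne_of_ne hza hzb]
    rw [h1]
    exact sameCycle_apply_self v z

/-- Trichotomy: after joining by a swap, same-cycle classes are those of `u`,
with the classes of `a` and `b` merged. -/
lemma sameCycle_mul_swap_cases {u : Perm (Fin n)} {a b : Fin n}
    (h : ¬ u.SameCycle a b) {z w : Fin n}
    (hzw : (u * Equiv.swap a b).SameCycle z w) :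
    u.SameCycle z w ∨ (u.SameCycle z a ∧ u.SameCycle w b) ∨
      (u.SameCycle z b ∧ u.SameCycle w a) := by
  set r : Setoid (Fin n) := {
    r := fun z w => u.SameCycle z w ∨ (u.SameCycle z a ∧ u.SameCycle w b) ∨
      (u.SameCycle z b ∧ u.SameCycle w a)
    iseqv := by
      constructor
      · intro z; exact Or.inl (SameCycle.refl u z)
      · rintro z w (h1 | ⟨h1, h2⟩ | ⟨h1, h2⟩)
        · exact Or.inl h1.symm
        · exact Or.inr (Or.inr ⟨h2, h1⟩)
        · exact Or.inr (Or.inl ⟨h2, h1⟩)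
      · rintro z w y (h1 | ⟨h1, h2⟩ | ⟨h1, h2⟩) (h3 | ⟨h3, h4⟩ | ⟨h3, h4⟩)
        · exact Or.inl (h1.trans h3)
        · exact Or.inr (Or.inl ⟨h1.trans h3, h4⟩)
        · exact Or.inr (Or.inr ⟨h1.trans h3, h4⟩)
        · exact Or.inr (Or.inl ⟨h1, h3.symm.trans h2⟩)
        · exact absurd (h3.symm.trans h2) h
        · exact Or.inl (h1.trans h4.symm)
        · exact Or.inr (Or.inr ⟨h1, h3.symm.trans h2⟩)
        · exact Or.inl (h1.trans h4.symm)
        · exact absurd (h2.symm.trans h3) h } with hr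
  exact sameCycle_implies (r := r) (by
    intro z
    show r.r z ((u * Equiv.swap a b) z)
    rcases eq_or_ne z a with rfl | hza
    · have h1 : (u * Equiv.swap z b) z = u b := by simp [Equiv.Perm.mul_apply]
      rw [h1]
      exact Or.inr (Or.inl ⟨SameCycle.refl u z, (sameCycle_apply_self u b).symm⟩)
    rcases eq_or_ne z b with rfl | hzb
    · have h1 : (u * Equiv.swap a z) z = u a := by simp [Equiv.Perm.mul_apply]
      rw [h1]
      exact Or.inr (Or.inr ⟨SameCycle.refl u z, (sameCycle_apply_self u a).symm⟩)
    · have h1 : (u * Equiv.swap a b) z = u z := by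
        simp [Equiv.Perm.mul_apply, Equiv.swap_apply_of_ne_of_ne hza hzb]
      rw [h1]
      exact Or.inl (sameCycle_apply_self u z)) hzw



lemma orb_le (x : Perm (Fin n)) : orb x ≤ n := by
  have := card_quot_le_card (scS x)
  simpa [orb] using this

lemma orb_one : orb (1 : Perm (Fin n)) = n := by
  have hbij : Function.Bijective (Quotient.mk (scS (1 : Perm (Fin n)))) := by
    constructor
    · intro z w hzw
      obtain ⟨i, hi⟩ : (1 : Perm (Fin n)).SameCycle z w := Quotient.exact hzw
      simpa using hi
    · intro q; exact Quotient.exists_rep q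
  have := Nat.card_eq_of_bijective _ hbij
  simpa [orb, Nat.card_eq_fintype_card] using this.symm

lemma eq_one_of_orb_eq (x : Perm (Fin n)) (h : orb x = n) : x = 1 := by
  classical
  letI : DecidableRel (scS x).r := fun a b => Classical.dec _
  have hsurj : Function.Surjective (Quotient.mk (scS x)) := fun q => Quotient.exists_rep q
  have hcard : Fintype.card (Quotient (scS x)) = Fintype.card (Fin n) := by
    have h1 : Nat.card (Quotient (scS x)) = n := h
    simpa [Nat.card_eq_fintype_card] using h1
  have hbij : Function.Bijective (Quotient.mk (scS x)) :=
    (Fintype.bijective_iff_surjective_and_card _).mpr ⟨hsurj, hcard.symm⟩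
  have hinj := hbij.injective
  ext z
  have : Quotient.mk (scS x) z = Quotient.mk (scS x) (x z) :=
    Quotient.sound (sameCycle_apply_self x z)
  have := hinj this
  simp [this.symm]

lemma orb_inv (x : Perm (Fin n)) : orb x⁻¹ = orb x := by
  have : scS x⁻¹ = scS x := Setoid.ext fun z w => Equiv.Perm.sameCycle_inv
  simp [orb, this]

/-- Key one-step estimate: a swap changes the orbit count by at most one (down). -/
lemma orb_le_orb_mul_swap_add_one (u : Perm (Fin n)) {a b : Fin n} (hab : a ≠ b) :
    orb u ≤ orb (u * Equiv.swap a b) + 1 := by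
  by_cases h : u.SameCycle a b
  · have hle : scS (u * Equiv.swap a b) ≤ scS u := scS_le_of_sameCycle h
    have := card_quot_le_of_le hle
    simpa [orb] using Nat.le_succ_of_le this
  · have hle : scS u ≤ scS (u * Equiv.swap a b) := scS_le_of_not_sameCycle hab h
    exact card_quot_le_add_one hle (fun z w hzw => sameCycle_mul_swap_cases h hzw)

lemma n_le_orb_add_length (l : List (Perm (Fin n))) (hl : ∀ t ∈ l, t.IsSwap) :
    n ≤ orb l.prod + l.length := by
  induction l with
  | nil => simp [orb_one]
  | cons t l ih =>
      obtain ⟨a, b, hab, rfl⟩ := hl t List.mem_cons_self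
      have h1 : n ≤ orb l.prod + l.length := ih (fun s hs => hl s (List.mem_cons_of_mem _ hs))
      have h2 : orb l.prod ≤ orb (Equiv.swap a b * l.prod) + 1 := by
        have h3 : orb l.prod = orb l.prod⁻¹ := (orb_inv _).symm
        have h4 : (Equiv.swap a b * l.prod)⁻¹ = l.prod⁻¹ * Equiv.swap a b := by
          rw [mul_inv_rev, Equiv.swap_inv]
        have h5 := orb_le_orb_mul_swap_add_one (l.prod⁻¹) hab
        calc orb l.prod = orb l.prod⁻¹ := h3
          _ ≤ orb (l.prod⁻¹ * Equiv.swap a b) + 1 := h5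
          _ = orb ((Equiv.swap a b * l.prod)⁻¹) + 1 := by rw [h4]
          _ = orb (Equiv.swap a b * l.prod) + 1 := by rw [orb_inv]
      calc n ≤ orb l.prod + l.length := h1
        _ ≤ orb (Equiv.swap a b * l.prod) + 1 + l.length := by omega
        _ = orb (List.prod (Equiv.swap a b :: l)) + (l.length + 1) := by
            rw [List.prod_cons]; omega
        _ = _ := by simp

lemma exists_swap_list : ∀ (k : ℕ) (x : Perm (Fin n)), n ≤ orb x + k →
    ∃ l : List (Perm (Fin n)), (∀ t ∈ l, t.IsSwap) ∧ l.prod = x ∧ l.length + orb x = n := by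
  intro k
  induction k with
  | zero =>
      intro x hx
      have h1 : orb x = n := le_antisymm (orb_le x) (by omega)
      have h2 : x = 1 := eq_one_of_orb_eq x h1
      exact ⟨[], by simp, by simp [h2], by simpa using h1⟩
  | succ k ih =>
      intro x hx
      by_cases horb : orb x = n
      · exact ⟨[], by simp, by simp [eq_one_of_orb_eq x horb], by simpa using horb⟩
      · have hxne : x ≠ 1 := fun h => horb (h ▸ orb_one)
        have hex : ∃ a, x a ≠ a := by
          by_contra hc
          push_neg at hc
          exact hxne (Equiv.ext fun z => by simp [hc z])
        obtain ⟨a, ha⟩ := hex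
        set b := x a with hb
        have hab : a ≠ b := fun h => ha h.symm
        set u := x * Equiv.swap a b with hu
        have hsc : x.SameCycle a b := ⟨1, by simp [hb]⟩
        have hub : u b = b := by
          rw [hu]; simp [Equiv.Perm.mul_apply, hb]
        have hufix : ∀ i : ℕ, (u ^ i) b = b := by
          intro i
          induction i with
          | zero => simp
          | succ k ih2 => rw [pow_succ' u k]; show u ((u^k) b) = b; rw [ih2, hub]
        have hnsc : ¬ u.SameCycle a b := by
          rintro hsc2
          obtain ⟨i, hilt, hi⟩ := hsc2.symm.exists_pow_eq'
          rw [hufix i] at hi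
          exact hab hi.symm
        have hxu : u * Equiv.swap a b = x := by
          rw [hu, mul_assoc]; simp
        have hle : scS u ≤ scS x := by
          have := scS_le_of_not_sameCycle hab hnsc
          rwa [hxu] at this
        have hlt : orb x < orb u := by
          have hscx : (scS x) a b := hsc
          have := card_quot_lt hle (a := a) (b := b) hnsc hscx
          simpa [orb] using this
        have hle2 : orb u ≤ orb x + 1 := by
          have := orb_le_orb_mul_swap_add_one u hab
          rwa [hxu] at this
        have horbu : orb u = orb x + 1 := by omega
        obtain ⟨l, hl1, hl2, hl3⟩ := ih u (by omega)
        refine ⟨l ++ [Equiv.swap a b], ?_, ?_, ?_⟩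
        · intro t ht
          rcases List.mem_append.mp ht with h | h
          · exact hl1 t h
          · simp at h; subst h; exact ⟨a, b, hab, rfl⟩
        · rw [List.prod_append, hl2]; simpa using hxu
        · simp only [List.length_append, List.length_cons, List.length_nil]
          omega

lemma reflLength_set_nonempty (x : Perm (Fin n)) :
    {k | ∃ l : List (Perm (Fin n)), (∀ t ∈ l, t.IsSwap) ∧ l.prod = x ∧ l.length = k}.Nonempty := by
  obtain ⟨l, h1, h2, h3⟩ := exists_swap_list (n - orb x) x (by have := orb_le x; omega)
  exact ⟨l.length, l, h1, h2, rfl⟩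

lemma reflLength_le_length {x : Perm (Fin n)} {l : List (Perm (Fin n))}
    (h1 : ∀ t ∈ l, t.IsSwap) (h2 : l.prod = x) : reflLength x ≤ l.length :=
  Nat.sInf_le ⟨l, h1, h2, rfl⟩

lemma reflLength_spec (x : Perm (Fin n)) :
    ∃ l : List (Perm (Fin n)), (∀ t ∈ l, t.IsSwap) ∧ l.prod = x ∧ l.length = reflLength x :=
  Nat.sInf_mem (reflLength_set_nonempty x)

lemma reflLength_add_orb (x : Perm (Fin n)) : reflLength x + orb x = n := by
  obtain ⟨l, h1, h2, h3⟩ := exists_swap_list (n - orb x) x (by have := orb_le x; omega)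
  have hub : reflLength x ≤ l.length := reflLength_le_length h1 h2
  obtain ⟨l', g1, g2, g3⟩ := reflLength_spec x
  have hlb : n ≤ orb x + reflLength x := by
    have := n_le_orb_add_length l' g1
    rw [g2, g3] at this; omega
  omega

lemma reflLength_mul_le (x y : Perm (Fin n)) :
    reflLength (x * y) ≤ reflLength x + reflLength y := by
  obtain ⟨l, h1, h2, h3⟩ := reflLength_spec x
  obtain ⟨l', g1, g2, g3⟩ := reflLength_spec y
  have : reflLength (x * y) ≤ (l ++ l').length := by
    refine reflLength_le_length ?_ ?_
    · intro t ht; rcases List.mem_append.mp ht with h | h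
      · exact h1 t h
      · exact g1 t h
    · rw [List.prod_append, h2, g2]
  simpa [h3, g3] using this

-- PiPerm lemmas
lemma pp_sameCycle_iff {σ : Setoid (Fin n)} {p : Perm (Fin n)} (hp : IsPiPerm σ p)
    {z w : Fin n} : p.SameCycle z w ↔ σ z w := by
  classical
  constructor
  · exact fun h => sameCycle_implies (r := σ) (fun z => (hp z).1) h
  · intro hσ
    -- first: from the minimum of a class, every class element is reachable
    have key : ∀ (m : Fin n), (∀ y', σ m y' → m ≤ y') →
        ∀ (k : ℕ) (y : Fin n), y.val ≤ k → σ m y → p.SameCycle m y := by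
      intro m hm k
      induction k with
      | zero =>
          intro y hy hσy
          have h0 : m ≤ y := hm y hσy
          have : y = m := by
            apply Fin.ext; omega
          rw [this]
      | succ k ih =>
          intro y hy hσy
          rcases eq_or_ne y m with rfl | hym
          · exact SameCycle.refl p y
          · have hmy : m < y := lt_of_le_of_ne (hm y hσy) (Ne.symm hym)
            set F := Finset.univ.filter (fun w => σ y w ∧ w < y) with hF
            have hFne : F.Nonempty := ⟨m, by simp [hF, σ.symm' hσy, hmy]⟩
            set z := F.max' hFne with hz
            have hzF : z ∈ F := F.max'_mem hFne
            have hzy : σ y z ∧ z < y := by simpa [hF] using hzF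
            have hc2 := (hp z).2.1 ⟨y, σ.symm' hzy.1, hzy.2⟩
            have hpzy : p z ≤ y := hc2.2 y (σ.symm' hzy.1) hzy.2
            have hpz : p z = y := by
              by_contra hne
              have h1 : p z < y := lt_of_le_of_ne hpzy hne
              have h2 : σ y (p z) := σ.trans' hzy.1 ((hp z).1)
              have h3 : p z ∈ F := by simp [hF, h2, h1]
              have h4 : p z ≤ z := F.le_max' _ h3
              exact absurd hc2.1 (not_lt.mpr h4)
            have hσmz : σ m z := σ.trans' hσy hzy.1
            have h5 : p.SameCycle m z := ih z (by omega) hσmz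
            exact h5.trans ⟨1, by simp [hpz]⟩
    classical
    set C := Finset.univ.filter (fun w => σ z w) with hC
    have hCne : C.Nonempty := ⟨z, by simp [hC, σ.refl' z]⟩
    set m := C.min' hCne with hm
    have hmC : m ∈ C := C.min'_mem hCne
    have hσzm : σ z m := by simpa [hC] using hmC
    have hmmin : ∀ y', σ m y' → m ≤ y' := by
      intro y' hy'
      have : σ z y' := σ.trans' hσzm hy'
      exact C.min'_le y' (by simp [hC, this])
    have h1 : p.SameCycle m z := key m hmmin z.val z le_rfl (σ.symm' hσzm)
    have h2 : p.SameCycle m w := key m hmmin w.val w le_rfl (σ.trans' (σ.symm' hσzm) hσ)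
    exact h1.symm.trans h2

lemma pp_unique {σ : Setoid (Fin n)} {p q : Perm (Fin n)}
    (hp : IsPiPerm σ p) (hq : IsPiPerm σ q) : p = q := by
  refine Equiv.ext fun x => ?_
  by_cases h : ∃ y, σ x y ∧ x < y
  · have h1 := (hp x).2.1 h
    have h2 := (hq x).2.1 h
    have le1 : p x ≤ q x := h1.2 (q x) (hq x).1 h2.1
    have le2 : q x ≤ p x := h2.2 (p x) (hp x).1 h1.1
    exact le_antisymm le1 le2
  · push_neg at h
    have h' : ∀ y, σ x y → y ≤ x := h
    have h1 := (hp x).2.2 h'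
    have h2 := (hq x).2.2 h'
    exact le_antisymm (h1 (q x) (hq x).1) (h2 (p x) (hp x).1)

lemma pp_scS {σ : Setoid (Fin n)} {p : Perm (Fin n)} (hp : IsPiPerm σ p) : scS p = σ :=
  Setoid.ext fun _ _ => pp_sameCycle_iff hp

lemma pp_orb {σ : Setoid (Fin n)} {p : Perm (Fin n)} (hp : IsPiPerm σ p) :
    orb p = Nat.card (Quotient σ) := by
  rw [orb, pp_scS hp]

lemma top_noncrossing : IsNoncrossing (⊤ : Setoid (Fin n)) :=
  fun _ _ _ _ _ _ _ _ _ => topRel _ _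

lemma pp_top (hn : 0 < n) : IsPiPerm (⊤ : Setoid (Fin n)) (finRotate n) := by
  obtain ⟨m, rfl⟩ := Nat.exists_eq_succ_of_ne_zero (Nat.pos_iff_ne_zero.mp hn)
  intro x
  refine ⟨topRel _ _, ?_, ?_⟩
  · rintro ⟨y, -, hxy⟩
    have hxlast : x < Fin.last m := lt_of_lt_of_le hxy (Fin.le_last y)
    have hval : ((finRotate (m+1)) x).val = x.val + 1 := by
      rw [finRotate_succ_apply]
      exact Fin.val_add_one_of_lt hxlast
    constructor
    · rw [Fin.lt_def, hval]; omega
    · rintro y - hy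
      rw [Fin.le_def, hval]
      rw [Fin.lt_def] at hy
      omega
  · rintro hall y -
    have hlast : x = Fin.last m := by
      have := hall (Fin.last m) (topRel _ _)
      exact le_antisymm (Fin.le_last x) this
    rw [hlast, finRotate_last]
    exact Fin.zero_le y

lemma card_quot_top (hn : 0 < n) : Nat.card (Quotient (⊤ : Setoid (Fin n))) = 1 := by
  rw [Nat.card_eq_one_iff_unique]
  constructor
  · constructor
    intro q1 q2
    induction q1 using Quotient.inductionOn with
    | h z =>
    induction q2 using Quotient.inductionOn with
    | h w => exact Quotient.sound (topRel z w)
  · exact ⟨Quotient.mk _ ⟨0, hn⟩⟩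

/-- Splitting a block of a noncrossing partition along a transposition of two of
its elements produces a noncrossing partition whose π-permutation is `v * swap a b`. -/
lemma split_lemma {τ : Setoid (Fin n)} (hτ : IsNoncrossing τ) {v : Perm (Fin n)}
    (hv : IsPiPerm τ v) {a b : Fin n} (hab : a < b) (hτab : τ a b) :
    ∃ σ : Setoid (Fin n), IsNoncrossing σ ∧ IsPiPerm σ (v * Equiv.swap a b) ∧ ¬ σ a b := by
  set I : Fin n → Prop := fun z => a < z ∧ z ≤ b with hI
  set σ : Setoid (Fin n) :=
    ⟨fun z w => τ z w ∧ (I z ↔ I w), by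
      constructor
      · exact fun z => ⟨τ.refl' z, Iff.rfl⟩
      · exact fun h => ⟨τ.symm' h.1, h.2.symm⟩
      · exact fun h1 h2 => ⟨τ.trans' h1.1 h2.1, h1.2.trans h2.2⟩⟩ with hσ
  have hIa : ¬ I a := fun h => lt_irrefl a h.1
  have hIb : I b := ⟨hab, le_refl b⟩
  have str1 : ∀ z w, τ z w → ¬ τ z a → I z → I w := by
    intro z w hzw hza hIz
    by_contra hIw
    have hzb : z ≠ b := fun h => hza (h ▸ τ.symm' hτab)
    have hzlt : z < b := lt_of_le_of_ne hIz.2 hzb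
    have hwa : w ≠ a := fun h => hza (h ▸ hzw)
    simp only [hI, not_and, not_le] at hIw
    rcases lt_or_ge a w with haw | hwa'
    · have hbw : b < w := hIw haw
      have := hτ a z b w hIz.1 hzlt hbw hτab hzw
      exact hza (τ.symm' this)
    · have hwlta : w < a := lt_of_le_of_ne hwa' hwa
      have := hτ w a z b hwlta hIz.1 hzlt (τ.symm' hzw) hτab
      exact hza (τ.trans' hzw this)
  have str : ∀ z w, τ z w → ¬ τ z a → (I z ↔ I w) := fun z w hzw hza =>
    ⟨str1 z w hzw hza, str1 w z (τ.symm' hzw) (fun hwa => hza (τ.trans' hzw hwa))⟩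
  have hσNC : IsNoncrossing σ := by
    intro a' b' c' d' h1 h2 h3 hac hbd
    refine ⟨hτ a' b' c' d' h1 h2 h3 hac.1 hbd.1, ?_⟩
    constructor
    · intro hIa'
      have hIc' : I c' := hac.2.mp hIa'
      exact ⟨lt_trans hIa'.1 h1, le_of_lt (lt_of_lt_of_le h2 hIc'.2)⟩
    · intro hIb'
      have hId' : I d' := hbd.2.mp hIb'
      have hIc' : I c' := ⟨lt_trans hIb'.1 h2, le_of_lt (lt_of_lt_of_le h3 hId'.2)⟩
      exact hac.2.mpr hIc'
  set u := v * Equiv.swap a b with hu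
  have hune : a ≠ b := ne_of_lt hab
  have hua : u a = v b := by rw [hu]; simp [Equiv.Perm.mul_apply]
  have hub : u b = v a := by rw [hu]; simp [Equiv.Perm.mul_apply]
  have huz : ∀ z, z ≠ a → z ≠ b → u z = v z := fun z h1 h2 => by
    rw [hu]; simp [Equiv.Perm.mul_apply, Equiv.swap_apply_of_ne_of_ne h1 h2]
  have hpp : IsPiPerm σ u := by
    intro x
    by_cases hτxa : τ x a
    case neg =>
      have hxa : x ≠ a := fun h => hτxa (h ▸ τ.refl' x)
      have hxb : x ≠ b := fun h => hτxa (h ▸ τ.symm' hτab)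
      have hue : u x = v x := huz x hxa hxb
      have hoff : ∀ y, σ x y ↔ τ x y := fun y =>
        ⟨fun h => h.1, fun h => ⟨h, str x y h hτxa⟩⟩
      obtain ⟨c1, c2, c3⟩ := hv x
      refine ⟨?_, ?_, ?_⟩
      · rw [hue]; exact (hoff _).mpr c1
      · rintro ⟨y, hy, hxy⟩
        obtain ⟨hlt, hmin⟩ := c2 ⟨y, (hoff y).mp hy, hxy⟩
        rw [hue]
        exact ⟨hlt, fun y' hy' hxy' => hmin y' ((hoff y').mp hy') hxy'⟩
      · intro hall y hy
        rw [hue]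
        exact c3 (fun y' hy' => hall y' ((hoff y').mpr hy')) y ((hoff y).mp hy)
    case pos =>
      have hτxb : τ x b := τ.trans' hτxa hτab
      rcases eq_or_ne x a with h | hxa
      · subst h
        by_cases hbig : ∃ y, τ b y ∧ b < y
        · obtain ⟨hblt, hbmin⟩ := (hv b).2.1 hbig
          have hIvb : ¬ I (v b) := fun h => absurd h.2 (not_le.mpr hblt)
          have hσab : σ x (v b) := ⟨τ.trans' hτab (hv b).1, iff_of_false hIa hIvb⟩
          have havb : x < v b := lt_trans hab hblt
          refine ⟨by rw [hua]; exact hσab, ?_, ?_⟩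
          · rintro -
            refine ⟨by rw [hua]; exact havb, ?_⟩
            intro y hy hay
            rw [hua]
            have hIy : ¬ I y := fun h => hIa (hy.2.mpr h)
            have hby : b < y := by
              rcases lt_or_ge b y with h | h
              · exact h
              · exact absurd ⟨hay, h⟩ hIy
            exact hbmin y (τ.trans' (τ.symm' hτab) hy.1) hby
          · intro hall
            exact absurd (hall (v b) hσab) (not_le.mpr havb)
        · push_neg at hbig
          have hbmin := (hv b).2.2 (fun y hy => hbig y hy)
          have hvba : v b ≤ x := hbmin x (τ.symm' hτab)
          have hIvb : ¬ I (v b) := fun h => absurd (lt_of_lt_of_le h.1 hvba) (lt_irrefl x)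
          have hσab : σ x (v b) := ⟨τ.trans' hτab (hv b).1, iff_of_false hIa hIvb⟩
          refine ⟨by rw [hua]; exact hσab, ?_, ?_⟩
          · rintro ⟨y, hy, hay⟩
            exfalso
            have hIy : ¬ I y := fun h => hIa (hy.2.mpr h)
            have hby : b < y := by
              rcases lt_or_ge b y with h | h
              · exact h
              · exact absurd ⟨hay, h⟩ hIy
            exact absurd (hbig y (τ.trans' (τ.symm' hτab) hy.1)) (not_le.mpr hby)
          · rintro - y hy
            rw [hua]
            exact hbmin y (τ.trans' (τ.symm' hτab) hy.1)
      rcases eq_or_ne x b with h | hxb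
      · subst h
        obtain ⟨halt, hamin⟩ := (hv a).2.1 ⟨x, hτab, hab⟩
        have hvab : v a ≤ x := hamin x hτab hab
        have hIva : I (v a) := ⟨halt, hvab⟩
        have hσbva : σ x (v a) := ⟨τ.trans' (τ.symm' hτab) (hv a).1, iff_of_true hIb hIva⟩
        refine ⟨by rw [hub]; exact hσbva, ?_, ?_⟩
        · rintro ⟨y, hy, hby⟩
          exfalso
          have hIy : I y := hy.2.mp hIb
          exact absurd hby (not_lt.mpr hIy.2)
        · rintro - y hy
          rw [hub]
          have hIy : I y := hy.2.mp hIb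
          exact hamin y (τ.trans' hτab hy.1) hIy.1
      · have hue : u x = v x := huz x hxa hxb
        by_cases hIx : I x
        · have hxltb : x < b := lt_of_le_of_ne hIx.2 hxb
          obtain ⟨hlt, hmin⟩ := (hv x).2.1 ⟨b, hτxb, hxltb⟩
          have hvxb : v x ≤ b := hmin b hτxb hxltb
          have hIvx : I (v x) := ⟨lt_trans hIx.1 hlt, hvxb⟩
          refine ⟨by rw [hue]; exact ⟨(hv x).1, iff_of_true hIx hIvx⟩, ?_, ?_⟩
          · rintro -
            rw [hue]
            exact ⟨hlt, fun y hy hxy => hmin y hy.1 hxy⟩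
          · intro hall
            exfalso
            have := hall b ⟨hτxb, iff_of_true hIx hIb⟩
            exact absurd hxltb (not_lt.mpr this)
        · have hxcase : x < a ∨ b < x := by
            simp only [hI, not_and, not_le] at hIx
            rcases lt_trichotomy x a with h | h | h
            · exact Or.inl h
            · exact absurd h hxa
            · exact Or.inr (hIx h)
          rcases hxcase with hxlta | hbltx
          · have hσxa : σ x a := ⟨hτxa, iff_of_false hIx hIa⟩
            obtain ⟨hlt, hmin⟩ := (hv x).2.1 ⟨a, hτxa, hxlta⟩
            have hvxa : v x ≤ a := hmin a hτxa hxlta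
            have hIvx : ¬ I (v x) := fun h => absurd (lt_of_lt_of_le h.1 hvxa) (lt_irrefl a)
            refine ⟨by rw [hue]; exact ⟨(hv x).1, iff_of_false hIx hIvx⟩, ?_, ?_⟩
            · rintro -
              rw [hue]
              exact ⟨hlt, fun y hy hxy => hmin y hy.1 hxy⟩
            · intro hall
              exact absurd (hall a hσxa) (not_le.mpr hxlta)
          · by_cases hbig : ∃ y, τ x y ∧ x < y
            · obtain ⟨hlt, hmin⟩ := (hv x).2.1 hbig
              have hIvx : ¬ I (v x) := fun h => absurd h.2 (not_le.mpr (lt_trans hbltx hlt))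
              have hσxvx : σ x (v x) := ⟨(hv x).1, iff_of_false hIx hIvx⟩
              refine ⟨by rw [hue]; exact hσxvx, ?_, ?_⟩
              · rintro -
                rw [hue]
                exact ⟨hlt, fun y hy hxy => hmin y hy.1 hxy⟩
              · intro hall
                exact absurd (hall (v x) hσxvx) (not_le.mpr hlt)
            · push_neg at hbig
              have hallτ : ∀ y, τ x y → y ≤ x := fun y hy => hbig y hy
              have hminall := (hv x).2.2 hallτ
              have hvxa : v x ≤ a := hminall a hτxa
              have hIvx : ¬ I (v x) := fun h => absurd (lt_of_lt_of_le h.1 hvxa) (lt_irrefl a)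
              refine ⟨by rw [hue]; exact ⟨(hv x).1, iff_of_false hIx hIvx⟩, ?_, ?_⟩
              · rintro ⟨y, hy, hxy⟩
                exact absurd hxy (not_lt.mpr (hallτ y hy.1))
              · rintro - y hy
                rw [hue]
                exact hminall y hy.1
  exact ⟨σ, hσNC, hpp, fun h => hIa (h.2.mpr hIb)⟩

/-- The merged setoid: classes of `p0` and `q0` are joined. -/
def mergeSetoid (ρ : Setoid (Fin n)) (p0 q0 : Fin n) : Setoid (Fin n) :=
  ⟨fun z w => ρ z w ∨ ((ρ z p0 ∨ ρ z q0) ∧ (ρ w p0 ∨ ρ w q0)), by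
    constructor
    · exact fun z => Or.inl (ρ.refl' z)
    · rintro z w (h | ⟨h1, h2⟩)
      · exact Or.inl (ρ.symm' h)
      · exact Or.inr ⟨h2, h1⟩
    · rintro z w y (h | ⟨h1, h2⟩) (h' | ⟨h3, h4⟩)
      · exact Or.inl (ρ.trans' h h')
      · refine Or.inr ⟨?_, h4⟩
        rcases h3 with h3 | h3
        · exact Or.inl (ρ.trans' h h3)
        · exact Or.inr (ρ.trans' h h3)
      · refine Or.inr ⟨h1, ?_⟩
        rcases h2 with h2 | h2
        · exact Or.inl (ρ.trans' (ρ.symm' h') h2)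
        · exact Or.inr (ρ.trans' (ρ.symm' h') h2)
      · exact Or.inr ⟨h1, h4⟩⟩

lemma mergeSetoid_rel {ρ : Setoid (Fin n)} {p0 q0 z w : Fin n} :
    mergeSetoid ρ p0 q0 z w ↔ ρ z w ∨ ((ρ z p0 ∨ ρ z q0) ∧ (ρ w p0 ∨ ρ w q0)) := Iff.rfl

lemma merge_trans {ρ : Setoid (Fin n)} {u : Perm (Fin n)} (hu : IsPiPerm ρ u)
    {p0 q0 : Fin n} (hpq : ¬ ρ p0 q0)
    (gap : ∀ p q q', ρ p p0 → ρ q q0 → ρ q' q0 → ¬(q < p ∧ p < q')) :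
    ∃ a b : Fin n, a ≠ b ∧ IsPiPerm (mergeSetoid ρ p0 q0) (Equiv.swap a b * u) := by
  classical
  set ρ' := mergeSetoid ρ p0 q0 with hρ'
  have hcross : ∀ z w, (ρ z p0 ∨ ρ z q0) → (ρ w p0 ∨ ρ w q0) → ρ' z w :=
    fun z w h1 h2 => Or.inr ⟨h1, h2⟩
  have hPQ : ∀ z, ρ z p0 → ρ z q0 → False := fun z h1 h2 => hpq (ρ.trans' (ρ.symm' h1) h2)
  set Qf : Finset (Fin n) := Finset.univ.filter (fun z => ρ z q0) with hQf
  set Pf : Finset (Fin n) := Finset.univ.filter (fun z => ρ z p0) with hPf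
  have hQmem : ∀ z, z ∈ Qf ↔ ρ z q0 := fun z => by simp [hQf]
  have hPmem : ∀ z, z ∈ Pf ↔ ρ z p0 := fun z => by simp [hPf]
  have hQne : Qf.Nonempty := ⟨q0, (hQmem q0).mpr (ρ.refl' q0)⟩
  have hPne : Pf.Nonempty := ⟨p0, (hPmem p0).mpr (ρ.refl' p0)⟩
  set mQ := Qf.min' hQne with hmQdef
  set MQ := Qf.max' hQne with hMQdef
  have hmQQ : ρ mQ q0 := (hQmem mQ).mp (Qf.min'_mem hQne)
  have hMQQ : ρ MQ q0 := (hQmem MQ).mp (Qf.max'_mem hQne)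
  have hmQle : ∀ q, ρ q q0 → mQ ≤ q := fun q hq => Qf.min'_le q ((hQmem q).mpr hq)
  have hMQge : ∀ q, ρ q q0 → q ≤ MQ := fun q hq => Qf.le_max' q ((hQmem q).mpr hq)
  have hPout : ∀ p, ρ p p0 → p < mQ ∨ MQ < p := by
    intro p hp
    have h1 := gap p mQ MQ hp hmQQ hMQQ
    rcases lt_or_ge p mQ with h | h
    · exact Or.inl h
    rcases lt_or_ge MQ p with h' | h'
    · exact Or.inr h'
    have hne1 : p ≠ mQ := fun he => hPQ p hp (by rw [he]; exact hmQQ)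
    have hne2 : p ≠ MQ := fun he => hPQ p hp (by rw [he]; exact hMQQ)
    exact absurd ⟨lt_of_le_of_ne h (Ne.symm hne1), lt_of_le_of_ne h' hne2⟩ h1
  have huMQ : u MQ = mQ := by
    have h3 := (hu MQ).2.2 (fun y hy => hMQge y (ρ.trans' (ρ.symm' hy) hMQQ))
    have h4 : ρ (u MQ) q0 := ρ.trans' (ρ.symm' (hu MQ).1) hMQQ
    exact le_antisymm (h3 mQ (ρ.trans' hMQQ (ρ.symm' hmQQ))) (hmQle (u MQ) h4)
  set Plt : Finset (Fin n) := Pf.filter (fun z => z < mQ) with hPltdef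
  set Pgt : Finset (Fin n) := Pf.filter (fun z => MQ < z) with hPgtdef
  set A : Fin n := if h : Plt.Nonempty then Plt.max' h else Pf.max' hPne with hA
  have hAP : ρ A p0 := by
    rw [hA]; split_ifs with h
    · exact (hPmem _).mp (Finset.mem_of_mem_filter _ (Plt.max'_mem h))
    · exact (hPmem _).mp (Pf.max'_mem hPne)
  have hup : ∀ z, ρ z p0 → ρ (u z) p0 := fun z hz => ρ.trans' (ρ.symm' (hu z).1) hz
  have huq : ∀ z, ρ z q0 → ρ (u z) q0 := fun z hz => ρ.trans' (ρ.symm' (hu z).1) hz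
  have haP : ρ (u A) p0 := hup A hAP
  have hane : u A ≠ mQ := fun h => hPQ (u A) haP (by rw [h]; exact hmQQ)
  have hu'z : ∀ z, u z ≠ u A → u z ≠ mQ → (Equiv.swap (u A) mQ * u) z = u z := by
    intro z h1 h2
    rw [Equiv.Perm.mul_apply, Equiv.swap_apply_of_ne_of_ne h1 h2]
  have hu'A : (Equiv.swap (u A) mQ * u) A = mQ := by
    rw [Equiv.Perm.mul_apply, Equiv.swap_apply_left]
  have hu'MQ : (Equiv.swap (u A) mQ * u) MQ = u A := by
    rw [Equiv.Perm.mul_apply, huMQ, Equiv.swap_apply_right]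
  have hclassS : ∀ x y, (ρ x p0 ∨ ρ x q0) → (ρ' x y ↔ (ρ y p0 ∨ ρ y q0)) := by
    intro x y hx
    constructor
    · rintro (h | ⟨h1, h2⟩)
      · rcases hx with hx | hx
        · exact Or.inl (ρ.trans' (ρ.symm' h) hx)
        · exact Or.inr (ρ.trans' (ρ.symm' h) hx)
      · exact h2
    · intro hy; exact Or.inr ⟨hx, hy⟩
  have hoff : ∀ x y, ¬ρ x p0 → ¬ρ x q0 → (ρ' x y ↔ ρ x y) := by
    intro x y h1 h2
    constructor
    · rintro (h | ⟨h3, h4⟩)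
      · exact h
      · rcases h3 with h3 | h3
        · exact absurd h3 h1
        · exact absurd h3 h2
    · exact Or.inl
  refine ⟨u A, mQ, hane, ?_⟩
  intro x
  by_cases hxq : ρ x q0
  · by_cases hxMQ : x = MQ
    · subst hxMQ
      by_cases hPltne : Plt.Nonempty
      · have hAeq : A = Plt.max' hPltne := by rw [hA, dif_pos hPltne]
        have hAmem : A ∈ Plt := by rw [hAeq]; exact Plt.max'_mem hPltne
        have hAltmQ : A < mQ := (Finset.mem_filter.mp hAmem).2
        have hAmaxlt : ∀ p, ρ p p0 → p < mQ → p ≤ A := by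
          intro p h1 h2
          rw [hAeq]
          exact Plt.le_max' p (Finset.mem_filter.mpr ⟨(hPmem p).mpr h1, h2⟩)
        by_cases hPgtne : Pgt.Nonempty
        · obtain ⟨g, hg⟩ := hPgtne
          have hgP : ρ g p0 := (hPmem g).mp (Finset.mem_of_mem_filter _ hg)
          have hgMQ : MQ < g := (Finset.mem_filter.mp hg).2
          have hAg : ρ A g := ρ.trans' hAP (ρ.symm' hgP)
          have hAltg : A < g := lt_trans (lt_of_lt_of_le hAltmQ (hmQle MQ hMQQ)) hgMQ
          obtain ⟨hAlt, hAmin⟩ := (hu A).2.1 ⟨g, hAg, hAltg⟩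
          have hMQuA : MQ < u A := by
            rcases hPout (u A) haP with h' | h'
            · exact absurd hAlt (not_lt.mpr (hAmaxlt (u A) haP h'))
            · exact h'
          refine ⟨?_, ?_, ?_⟩
          · rw [hu'MQ]; exact hcross _ _ (Or.inr hMQQ) (Or.inl haP)
          · rintro -
            rw [hu'MQ]
            refine ⟨hMQuA, ?_⟩
            intro y hy hMQy
            rcases (hclassS MQ y (Or.inr hMQQ)).mp hy with hyP | hyQ
            · exact hAmin y (ρ.trans' hAP (ρ.symm' hyP))
                (lt_trans (lt_of_lt_of_le hAltmQ (hmQle MQ hMQQ)) hMQy)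
            · exact absurd hMQy (not_lt.mpr (hMQge y hyQ))
          · intro hall
            exact absurd hMQuA
              (not_lt.mpr (hall (u A) ((hclassS MQ (u A) (Or.inr hMQQ)).mpr (Or.inl haP))))
        · have hallPlt : ∀ p, ρ p p0 → p < mQ := by
            intro p hp
            rcases hPout p hp with h | h
            · exact h
            · exact absurd ⟨p, Finset.mem_filter.mpr ⟨(hPmem p).mpr hp, h⟩⟩ hPgtne
          have hminall : ∀ y, ρ A y → u A ≤ y :=
            (hu A).2.2 (fun y hy => hAmaxlt y (ρ.trans' (ρ.symm' hy) hAP)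
              (hallPlt y (ρ.trans' (ρ.symm' hy) hAP)))
          refine ⟨?_, ?_, ?_⟩
          · rw [hu'MQ]; exact hcross _ _ (Or.inr hMQQ) (Or.inl haP)
          · rintro ⟨y, hy, hMQy⟩
            exfalso
            rcases (hclassS MQ y (Or.inr hMQQ)).mp hy with hyP | hyQ
            · exact absurd hMQy
                (not_lt.mpr (le_trans (le_of_lt (hallPlt y hyP)) (hmQle MQ hMQQ)))
            · exact absurd hMQy (not_lt.mpr (hMQge y hyQ))
          · rintro - y hy
            rw [hu'MQ]
            rcases (hclassS MQ y (Or.inr hMQQ)).mp hy with hyP | hyQ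
            · exact hminall y (ρ.trans' hAP (ρ.symm' hyP))
            · exact le_trans (le_of_lt (hallPlt (u A) haP)) (hmQle y hyQ)
      · have hAeq : A = Pf.max' hPne := by rw [hA, dif_neg hPltne]
        have hallPgt : ∀ p, ρ p p0 → MQ < p := by
          intro p hp
          rcases hPout p hp with h | h
          · exact absurd ⟨p, Finset.mem_filter.mpr ⟨(hPmem p).mpr hp, h⟩⟩ hPltne
          · exact h
        have hAmax : ∀ p, ρ p p0 → p ≤ A := by
          intro p hp
          rw [hAeq]; exact Pf.le_max' p ((hPmem p).mpr hp)
        have hminall : ∀ y, ρ A y → u A ≤ y :=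
          (hu A).2.2 (fun y hy => hAmax y (ρ.trans' (ρ.symm' hy) hAP))
        have hMQuA : MQ < u A := hallPgt (u A) haP
        refine ⟨?_, ?_, ?_⟩
        · rw [hu'MQ]; exact hcross _ _ (Or.inr hMQQ) (Or.inl haP)
        · rintro -
          rw [hu'MQ]
          refine ⟨hMQuA, ?_⟩
          intro y hy hMQy
          rcases (hclassS MQ y (Or.inr hMQQ)).mp hy with hyP | hyQ
          · exact hminall y (ρ.trans' hAP (ρ.symm' hyP))
          · exact absurd hMQy (not_lt.mpr (hMQge y hyQ))
        · intro hall
          exact absurd hMQuA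
            (not_lt.mpr (hall (u A) ((hclassS MQ (u A) (Or.inr hMQQ)).mpr (Or.inl haP))))
    · -- x ∈ Q, x ≠ MQ
      have hxlt : x < MQ := lt_of_le_of_ne (hMQge x hxq) hxMQ
      obtain ⟨hlt, hmin⟩ := (hu x).2.1 ⟨MQ, ρ.trans' hxq (ρ.symm' hMQQ), hxlt⟩
      have huxa : u x ≠ u A := fun h => hPQ (u A) haP (by rw [← h]; exact huq x hxq)
      have huxb : u x ≠ mQ := by
        intro h
        have h1 : mQ ≤ x := hmQle x hxq
        rw [h] at hlt
        exact absurd hlt (not_lt.mpr h1)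
      have hueq : (Equiv.swap (u A) mQ * u) x = u x := hu'z x huxa huxb
      refine ⟨by rw [hueq]; exact Or.inl (hu x).1, ?_, ?_⟩
      · rintro -
        rw [hueq]
        refine ⟨hlt, ?_⟩
        intro y hy hxy
        rcases (hclassS x y (Or.inr hxq)).mp hy with hyP | hyQ
        · rcases hPout y hyP with h' | h'
          · exact absurd h' (not_lt.mpr (le_trans (hmQle x hxq) (le_of_lt hxy)))
          · exact le_of_lt (lt_of_le_of_lt (hmin MQ (ρ.trans' hxq (ρ.symm' hMQQ)) hxlt) h')
        · exact hmin y (ρ.trans' hxq (ρ.symm' hyQ)) hxy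
      · intro hall
        have := hall MQ ((hclassS x MQ (Or.inr hxq)).mpr (Or.inr hMQQ))
        exact absurd hxlt (not_lt.mpr this)
  by_cases hxp : ρ x p0
  · by_cases hxA : x = A
    · subst hxA
      by_cases hPltne : Plt.Nonempty
      · have hAeq : A = Plt.max' hPltne := by rw [hA, dif_pos hPltne]
        have hAmem : A ∈ Plt := by rw [hAeq]; exact Plt.max'_mem hPltne
        have hAltmQ : A < mQ := (Finset.mem_filter.mp hAmem).2
        have hAmaxlt : ∀ p, ρ p p0 → p < mQ → p ≤ A := by
          intro p h1 h2
          rw [hAeq]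
          exact Plt.le_max' p (Finset.mem_filter.mpr ⟨(hPmem p).mpr h1, h2⟩)
        refine ⟨by rw [hu'A]; exact hcross _ _ (Or.inl hAP) (Or.inr hmQQ), ?_, ?_⟩
        · rintro -
          rw [hu'A]
          refine ⟨hAltmQ, ?_⟩
          intro y hy hAy
          rcases (hclassS A y (Or.inl hAP)).mp hy with hyP | hyQ
          · rcases hPout y hyP with h' | h'
            · exact absurd (hAmaxlt y hyP h') (not_le.mpr hAy)
            · exact le_trans (hmQle MQ hMQQ) (le_of_lt h')
          · exact hmQle y hyQ
        · intro hall
          exact absurd hAltmQ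
            (not_lt.mpr (hall mQ ((hclassS A mQ (Or.inl hAP)).mpr (Or.inr hmQQ))))
      · have hAeq : A = Pf.max' hPne := by rw [hA, dif_neg hPltne]
        have hallPgt : ∀ p, ρ p p0 → MQ < p := by
          intro p hp
          rcases hPout p hp with h | h
          · exact absurd ⟨p, Finset.mem_filter.mpr ⟨(hPmem p).mpr hp, h⟩⟩ hPltne
          · exact h
        have hAmax : ∀ p, ρ p p0 → p ≤ A := by
          intro p hp
          rw [hAeq]; exact Pf.le_max' p ((hPmem p).mpr hp)
        refine ⟨by rw [hu'A]; exact hcross _ _ (Or.inl hAP) (Or.inr hmQQ), ?_, ?_⟩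
        · rintro ⟨y, hy, hAy⟩
          exfalso
          rcases (hclassS A y (Or.inl hAP)).mp hy with hyP | hyQ
          · exact absurd hAy (not_lt.mpr (hAmax y hyP))
          · exact absurd hAy
              (not_lt.mpr (le_trans (hMQge y hyQ) (le_of_lt (hallPgt A hAP))))
        · rintro - y hy
          rw [hu'A]
          rcases (hclassS A y (Or.inl hAP)).mp hy with hyP | hyQ
          · exact le_trans (hmQle MQ hMQQ) (le_of_lt (hallPgt y hyP))
          · exact hmQle y hyQ
    · -- x ∈ P, x ≠ A
      have huxa : u x ≠ u A := fun h => hxA (u.injective h)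
      have huxb : u x ≠ mQ := fun h => hPQ (u x) (hup x hxp) (by rw [h]; exact hmQQ)
      have hueq : (Equiv.swap (u A) mQ * u) x = u x := hu'z x huxa huxb
      by_cases hbig : ∃ y, ρ x y ∧ x < y
      · obtain ⟨hlt, hmin⟩ := (hu x).2.1 hbig
        have hnoQ : ∀ q, ρ q q0 → x < q → u x ≤ q := by
          intro q hq hxq'
          by_contra hc
          push_neg at hc
          have hxmQ : x < mQ := by
            rcases hPout x hxp with h' | h'
            · exact h'
            · exact absurd hxq' (not_lt.mpr (le_trans (hMQge q hq) (le_of_lt h')))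
          have hPltne : Plt.Nonempty :=
            ⟨x, Finset.mem_filter.mpr ⟨(hPmem x).mpr hxp, hxmQ⟩⟩
          have hAeq : A = Plt.max' hPltne := by rw [hA, dif_pos hPltne]
          have hAmem : A ∈ Plt := by rw [hAeq]; exact Plt.max'_mem hPltne
          have hAltmQ : A < mQ := (Finset.mem_filter.mp hAmem).2
          have hxleA : x ≤ A := by
            rw [hAeq]
            exact Plt.le_max' x (Finset.mem_filter.mpr ⟨(hPmem x).mpr hxp, hxmQ⟩)
          have hxltA : x < A := lt_of_le_of_ne hxleA hxA
          have huxA : u x ≤ A := hmin A (ρ.trans' hxp (ρ.symm' hAP)) hxltA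
          have : u x ≤ q := le_trans huxA (le_trans (le_of_lt hAltmQ) (hmQle q hq))
          exact absurd hc (not_lt.mpr this)
        refine ⟨by rw [hueq]; exact Or.inl (hu x).1, ?_, ?_⟩
        · rintro -
          rw [hueq]
          refine ⟨hlt, ?_⟩
          intro y hy hxy
          rcases (hclassS x y (Or.inl hxp)).mp hy with hyP | hyQ
          · exact hmin y (ρ.trans' hxp (ρ.symm' hyP)) hxy
          · exact hnoQ y hyQ hxy
        · intro hall
          exact absurd hlt (not_lt.mpr (hall (u x) (Or.inl (hu x).1)))
      · push_neg at hbig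
        have hallle : ∀ y, ρ x y → y ≤ x := fun y hy => hbig y hy
        have hminall := (hu x).2.2 hallle
        have hxgtMQ : MQ < x := by
          rcases hPout x hxp with h' | h'
          · exfalso
            have hPltne : Plt.Nonempty :=
              ⟨x, Finset.mem_filter.mpr ⟨(hPmem x).mpr hxp, h'⟩⟩
            have hAeq : A = Plt.max' hPltne := by rw [hA, dif_pos hPltne]
            have hxleA : x ≤ A := by
              rw [hAeq]
              exact Plt.le_max' x (Finset.mem_filter.mpr ⟨(hPmem x).mpr hxp, h'⟩)
            exact hxA (le_antisymm hxleA (hallle A (ρ.trans' hxp (ρ.symm' hAP))))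
          · exact h'
        have hxmaxS : ∀ y, (ρ y p0 ∨ ρ y q0) → y ≤ x := by
          intro y hy
          rcases hy with hyP | hyQ
          · exact hallle y (ρ.trans' hxp (ρ.symm' hyP))
          · exact le_trans (hMQge y hyQ) (le_of_lt hxgtMQ)
        have hPltne : Plt.Nonempty := by
          by_contra hc
          have hAeq : A = Pf.max' hPne := by rw [hA, dif_neg hc]
          have hxleA : x ≤ A := by rw [hAeq]; exact Pf.le_max' x ((hPmem x).mpr hxp)
          exact hxA (le_antisymm hxleA (hallle A (ρ.trans' hxp (ρ.symm' hAP))))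
        have hAeq : A = Plt.max' hPltne := by rw [hA, dif_pos hPltne]
        have hAmem : A ∈ Plt := by rw [hAeq]; exact Plt.max'_mem hPltne
        have hAltmQ : A < mQ := (Finset.mem_filter.mp hAmem).2
        have huxA : u x ≤ A := hminall A (ρ.trans' hxp (ρ.symm' hAP))
        refine ⟨by rw [hueq]; exact Or.inl (hu x).1, ?_, ?_⟩
        · rintro ⟨y, hy, hxy⟩
          exact absurd hxy (not_lt.mpr (hxmaxS y ((hclassS x y (Or.inl hxp)).mp hy)))
        · rintro - y hy
          rw [hueq]
          rcases (hclassS x y (Or.inl hxp)).mp hy with hyP | hyQ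
          · exact hminall y (ρ.trans' hxp (ρ.symm' hyP))
          · exact le_trans huxA (le_trans (le_of_lt hAltmQ) (hmQle y hyQ))
  · -- x outside P ∪ Q
    have huxa : u x ≠ u A := fun h => hxp (by rw [u.injective h]; exact hAP)
    have huxb : u x ≠ mQ := fun h =>
      hxq (ρ.trans' (hu x).1 (by rw [h]; exact hmQQ))
    have hueq : (Equiv.swap (u A) mQ * u) x = u x := hu'z x huxa huxb
    have hoffx : ∀ y, ρ' x y ↔ ρ x y := fun y => hoff x y hxp hxq
    obtain ⟨c1, c2, c3⟩ := hu x
    refine ⟨?_, ?_, ?_⟩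
    · rw [hueq]; exact (hoffx _).mpr c1
    · rintro ⟨y, hy, hxy⟩
      obtain ⟨hlt, hmin⟩ := c2 ⟨y, (hoffx y).mp hy, hxy⟩
      rw [hueq]
      exact ⟨hlt, fun y' hy' hxy' => hmin y' ((hoffx y').mp hy') hxy'⟩
    · intro hall y hy
      rw [hueq]
      exact c3 (fun y' hy' => hall y' ((hoffx y').mpr hy')) y ((hoffx y).mp hy)

lemma step_lemma {σ τ : Setoid (Fin n)} (hσ : IsNoncrossing σ) (hτ : IsNoncrossing τ)
    (hle : σ ≤ τ) {z0 w0 : Fin n} (hzw : τ z0 w0) (hnzw : ¬ σ z0 w0)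
    {u : Perm (Fin n)} (hu : IsPiPerm σ u) :
    ∃ (ρ' : Setoid (Fin n)) (a b : Fin n), a ≠ b ∧ IsPiPerm ρ' (Equiv.swap a b * u) ∧
      IsNoncrossing ρ' ∧ σ ≤ ρ' ∧ ρ' ≤ τ ∧
      Nat.card (Quotient ρ') < Nat.card (Quotient σ) := by
  classical
  set Bf : Finset (Fin n) := Finset.univ.filter (fun r => τ r z0) with hBf
  have hBmem : ∀ r, r ∈ Bf ↔ τ r z0 := fun r => by simp [hBf]
  set Cf : Fin n → Finset (Fin n) := fun x => Finset.univ.filter (fun w => σ x w) with hCf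
  have hCmem : ∀ x w, w ∈ Cf x ↔ σ x w := fun x w => by simp [hCf]
  have hCne : ∀ x, (Cf x).Nonempty := fun x => ⟨x, (hCmem x x).mpr (σ.refl' x)⟩
  set span : Fin n → ℕ :=
    fun x => ((Cf x).max' (hCne x)).val - ((Cf x).min' (hCne x)).val with hspan
  have hBne : Bf.Nonempty := ⟨z0, (hBmem z0).mpr (τ.refl' z0)⟩
  obtain ⟨q0, hq0B, hq0min⟩ := Finset.exists_min_image Bf span hBne
  have hq0τ : τ q0 z0 := (hBmem q0).mp hq0B
  set mQ := (Cf q0).min' (hCne q0) with hmQdef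
  set MQ := (Cf q0).max' (hCne q0) with hMQdef
  have hmQσ : σ q0 mQ := (hCmem _ _).mp ((Cf q0).min'_mem _)
  have hMQσ : σ q0 MQ := (hCmem _ _).mp ((Cf q0).max'_mem _)
  have hmQle : ∀ q, σ q0 q → mQ ≤ q := fun q hq => (Cf q0).min'_le q ((hCmem _ _).mpr hq)
  have hMQge : ∀ q, σ q0 q → q ≤ MQ := fun q hq => (Cf q0).le_max' q ((hCmem _ _).mpr hq)
  have hmQMQ : mQ ≤ MQ := hmQle MQ hMQσ
  have hISO : ∀ r, τ r z0 → ¬ σ r q0 → ¬ (mQ < r ∧ r < MQ) := by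
    rintro r hrB hrQ ⟨hh1, hh2⟩
    by_cases hRin : ∀ r', σ r r' → (mQ < r' ∧ r' < MQ)
    · have hmax := hRin _ ((hCmem r _).mp ((Cf r).max'_mem (hCne r)))
      have hmin := hRin _ ((hCmem r _).mp ((Cf r).min'_mem (hCne r)))
      have hminmax : ((Cf r).min' (hCne r)) ≤ ((Cf r).max' (hCne r)) :=
        (Cf r).min'_le _ ((Cf r).max'_mem (hCne r))
      have hspanlt : span r < span q0 := by
        show ((Cf r).max' (hCne r)).val - ((Cf r).min' (hCne r)).val
          < ((Cf q0).max' (hCne q0)).val - ((Cf q0).min' (hCne q0)).val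
        have e1 : mQ.val < ((Cf r).min' (hCne r)).val := hmin.1
        have e2 : ((Cf r).max' (hCne r)).val < MQ.val := hmax.2
        have e3 : ((Cf r).min' (hCne r)).val ≤ ((Cf r).max' (hCne r)).val := hminmax
        rw [← hmQdef, ← hMQdef]
        omega
      exact absurd (hq0min r ((hBmem r).mpr hrB)) (not_le.mpr hspanlt)
    · push_neg at hRin
      obtain ⟨r', hr', hout⟩ := hRin
      have hne1 : r' ≠ mQ := fun he =>
        hrQ (σ.trans' hr' (by rw [he]; exact σ.symm' hmQσ))
      have hne2 : r' ≠ MQ := fun he =>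
        hrQ (σ.trans' hr' (by rw [he]; exact σ.symm' hMQσ))
      have hcase : r' < mQ ∨ MQ < r' := by
        rcases lt_or_ge r' mQ with h | h
        · exact Or.inl h
        · exact Or.inr (lt_of_le_of_ne (hout (lt_of_le_of_ne h (Ne.symm hne1))) (Ne.symm hne2))
      rcases hcase with h | h
      · have := hσ r' mQ r MQ h hh1 hh2 (σ.symm' hr') (σ.trans' (σ.symm' hmQσ) hMQσ)
        exact hrQ (σ.trans' hr' (σ.trans' this (σ.symm' hmQσ)))
      · have := hσ mQ r MQ r' hh1 hh2 h (σ.trans' (σ.symm' hmQσ) hMQσ) hr'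
        exact hrQ (σ.trans' (σ.symm' this) (σ.symm' hmQσ))
  have hBQex : ∃ r, τ r z0 ∧ ¬ σ r q0 := by
    by_cases h : σ z0 q0
    · exact ⟨w0, τ.symm' hzw, fun hc => hnzw (σ.trans' h (σ.symm' hc))⟩
    · exact ⟨z0, τ.refl' z0, h⟩
  set BmQ : Finset (Fin n) := Bf.filter (fun r => ¬ σ r q0) with hBmQdef
  have hBmQmem : ∀ r, r ∈ BmQ ↔ (τ r z0 ∧ ¬ σ r q0) := fun r => by
    simp [hBmQdef, hBf]
  have hBmQne : BmQ.Nonempty := by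
    obtain ⟨r, h1, h2⟩ := hBQex
    exact ⟨r, (hBmQmem r).mpr ⟨h1, h2⟩⟩
  set s0 : Fin n := if h : (BmQ.filter (fun r => MQ < r)).Nonempty
    then (BmQ.filter (fun r => MQ < r)).min' h else BmQ.min' hBmQne with hs0
  have hs0mem : s0 ∈ BmQ := by
    rw [hs0]; split_ifs with h
    · exact Finset.mem_of_mem_filter _ (Finset.min'_mem _ h)
    · exact BmQ.min'_mem hBmQne
  have hs0B : τ s0 z0 := ((hBmQmem s0).mp hs0mem).1
  have hs0Q : ¬ σ s0 q0 := ((hBmQmem s0).mp hs0mem).2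
  have hgap : ∀ p q q', σ p s0 → σ q q0 → σ q' q0 → ¬(q < p ∧ p < q') := by
    rintro p q q' hp hq hq' ⟨hh1, hh2⟩
    have hpB : τ p z0 := τ.trans' (hle hp) hs0B
    have hpQ : ¬ σ p q0 := fun hc => hs0Q (σ.trans' (σ.symm' hp) hc)
    have hq1 : mQ ≤ q := hmQle q (σ.symm' hq)
    have hq2 : q' ≤ MQ := hMQge q' (σ.symm' hq')
    exact hISO p hpB hpQ ⟨lt_of_le_of_lt hq1 hh1, lt_of_lt_of_le hh2 hq2⟩
  obtain ⟨a, b, hab, hpp⟩ := merge_trans hu hs0Q hgap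
  set ρ' := mergeSetoid σ s0 q0 with hρ'def
  have hσle : σ ≤ ρ' := fun x y h => Or.inl h
  have hCB : ∀ z, (σ z s0 ∨ σ z q0) → τ z z0 := by
    rintro z (h | h)
    · exact τ.trans' (hle h) hs0B
    · exact τ.trans' (hle h) hq0τ
  have hρτ : ρ' ≤ τ := by
    rintro x y (h | ⟨h1', h2'⟩)
    · exact hle h
    · exact τ.trans' (hCB x h1') (τ.symm' (hCB y h2'))
  have hcard : Nat.card (Quotient ρ') < Nat.card (Quotient σ) :=
    card_quot_lt hσle (a := s0) (b := q0) hs0Q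
      (Or.inr ⟨Or.inl (σ.refl' s0), Or.inr (σ.refl' q0)⟩)
  have hρNC : IsNoncrossing ρ' := by
    intro a' b' c' d' h1 h2 h3 hac hbd
    rcases hac with hac | ⟨hCa, hCc⟩
    · rcases hbd with hbd | ⟨hCb, hCd⟩
      · exact Or.inl (hσ a' b' c' d' h1 h2 h3 hac hbd)
      · by_cases hCa' : (σ a' s0 ∨ σ a' q0)
        · exact Or.inr ⟨hCa', hCb⟩
        · have hCc' : ¬(σ c' s0 ∨ σ c' q0) := fun hc => hCa' (by
            rcases hc with hc | hc
            · exact Or.inl (σ.trans' hac hc)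
            · exact Or.inr (σ.trans' hac hc))
          have hbB : τ b' z0 := hCB b' hCb
          have hdB : τ d' z0 := hCB d' hCd
          have haB : τ a' z0 := by
            have := hτ a' b' c' d' h1 h2 h3 (hle hac) (τ.trans' hbB (τ.symm' hdB))
            exact τ.trans' this hbB
          have hcB : τ c' z0 := τ.trans' (τ.symm' (hle hac)) haB
          have haQ : ¬ σ a' q0 := fun hc => hCa' (Or.inr hc)
          have hcQ : ¬ σ c' q0 := fun hc => hCc' (Or.inr hc)
          have haS : ¬ σ a' s0 := fun hc => hCa' (Or.inl hc)
          rcases hCb with hbP | hbQ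
          · rcases hCd with hdP | hdQ
            · exact Or.inl (hσ a' b' c' d' h1 h2 h3 hac (σ.trans' hbP (σ.symm' hdP)))
            · -- b' ∈ P, d' ∈ Q
              have hd2 : d' ≤ MQ := hMQge d' (σ.symm' hdQ)
              have hc'lt : c' < mQ := by
                rcases lt_or_ge c' mQ with h | h
                · exact h
                · exfalso
                  have hne : c' ≠ mQ := fun he => hcQ (by rw [he]; exact σ.symm' hmQσ)
                  exact hISO c' hcB hcQ
                    ⟨lt_of_le_of_ne h (Ne.symm hne), lt_of_lt_of_le h3 hd2⟩
              by_cases hgtne : (BmQ.filter (fun r => MQ < r)).Nonempty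
              · have hs0gt : MQ < s0 := by
                  rw [hs0, dif_pos hgtne]
                  exact (Finset.mem_filter.mp (Finset.min'_mem _ hgtne)).2
                have hcs : c' < s0 := lt_of_lt_of_le hc'lt (le_trans hmQMQ (le_of_lt hs0gt))
                exact Or.inl (hσ a' b' c' s0 h1 h2 hcs hac hbP)
              · have hs0eq : s0 = BmQ.min' hBmQne := by rw [hs0, dif_neg hgtne]
                have hamem : a' ∈ BmQ := (hBmQmem a').mpr ⟨haB, haQ⟩
                have hs0a : s0 ≤ a' := by rw [hs0eq]; exact BmQ.min'_le a' hamem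
                have hs0na : s0 ≠ a' := fun he => haS (by rw [← he])
                exfalso
                have := hσ s0 a' b' c' (lt_of_le_of_ne hs0a hs0na) h1 h2 (σ.symm' hbP) hac
                exact haS (σ.symm' this)
          · rcases hCd with hdP | hdQ
            · -- b' ∈ Q, d' ∈ P
              have hb1 : mQ ≤ b' := hmQle b' (σ.symm' hbQ)
              have hc'gt : MQ < c' := by
                rcases lt_or_ge MQ c' with h | h
                · exact h
                · exfalso
                  have hne : c' ≠ MQ := fun he => hcQ (by rw [he]; exact σ.symm' hMQσ)
                  exact hISO c' hcB hcQ
                    ⟨lt_of_le_of_lt hb1 h2, lt_of_le_of_ne h hne⟩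
              have hcmem : c' ∈ BmQ.filter (fun r => MQ < r) :=
                Finset.mem_filter.mpr ⟨(hBmQmem c').mpr ⟨hcB, hcQ⟩, hc'gt⟩
              have hgtne : (BmQ.filter (fun r => MQ < r)).Nonempty := ⟨c', hcmem⟩
              have hs0eq : s0 = (BmQ.filter (fun r => MQ < r)).min' hgtne := by
                rw [hs0, dif_pos hgtne]
              have hs0c : s0 ≤ c' := by rw [hs0eq]; exact Finset.min'_le _ c' hcmem
              have hs0gt : MQ < s0 := by
                rw [hs0eq]; exact (Finset.mem_filter.mp (Finset.min'_mem _ hgtne)).2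
              have ha'lt : a' < mQ := by
                rcases lt_or_ge a' mQ with h | h
                · exact h
                · exfalso
                  have hne : a' ≠ mQ := fun he => haQ (by rw [he]; exact σ.symm' hmQσ)
                  have hb2 : b' ≤ MQ := hMQge b' (σ.symm' hbQ)
                  exact hISO a' haB haQ
                    ⟨lt_of_le_of_ne h (Ne.symm hne), lt_of_lt_of_le h1 hb2⟩
              have hcS : ¬ σ c' s0 := fun hc => hCc' (Or.inl hc)
              have hs0nc : s0 ≠ c' := fun he => hcS (by rw [← he])
              have has0 : a' < s0 :=
                lt_of_lt_of_le ha'lt (le_trans hmQMQ (le_of_lt hs0gt))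
              exfalso
              have := hσ a' s0 c' d' has0 (lt_of_le_of_ne hs0c hs0nc) h3 hac (σ.symm' hdP)
              exact haS this
            · exact Or.inl (hσ a' b' c' d' h1 h2 h3 hac (σ.trans' hbQ (σ.symm' hdQ)))
    · rcases hbd with hbd | ⟨hCb, hCd⟩
      · by_cases hCb' : (σ b' s0 ∨ σ b' q0)
        · exact Or.inr ⟨hCa, hCb'⟩
        · have hCd' : ¬(σ d' s0 ∨ σ d' q0) := fun hc => hCb' (by
            rcases hc with hc | hc
            · exact Or.inl (σ.trans' hbd hc)
            · exact Or.inr (σ.trans' hbd hc))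
          have haB : τ a' z0 := hCB a' hCa
          have hcB : τ c' z0 := hCB c' hCc
          have hbB : τ b' z0 := by
            have := hτ a' b' c' d' h1 h2 h3 (τ.trans' haB (τ.symm' hcB)) (hle hbd)
            exact τ.trans' (τ.symm' this) haB
          have hdB : τ d' z0 := τ.trans' (τ.symm' (hle hbd)) hbB
          have hbQ : ¬ σ b' q0 := fun hc => hCb' (Or.inr hc)
          have hdQ : ¬ σ d' q0 := fun hc => hCd' (Or.inr hc)
          have hbS : ¬ σ b' s0 := fun hc => hCb' (Or.inl hc)
          have hdS : ¬ σ d' s0 := fun hc => hCd' (Or.inl hc)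
          rcases hCa with haP | haQ
          · rcases hCc with hcP | hcQ
            · exact Or.inl (hσ a' b' c' d' h1 h2 h3 (σ.trans' haP (σ.symm' hcP)) hbd)
            · -- a' ∈ P, c' ∈ Q
              have hc1 : mQ ≤ c' := hmQle c' (σ.symm' hcQ)
              have hc2 : c' ≤ MQ := hMQge c' (σ.symm' hcQ)
              have hb'lt : b' < mQ := by
                rcases lt_or_ge b' mQ with h | h
                · exact h
                · exfalso
                  have hne : b' ≠ mQ := fun he => hbQ (by rw [he]; exact σ.symm' hmQσ)
                  exact hISO b' hbB hbQ
                    ⟨lt_of_le_of_ne h (Ne.symm hne), lt_of_lt_of_le h2 hc2⟩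
              have hd'gt : MQ < d' := by
                rcases lt_or_ge MQ d' with h | h
                · exact h
                · exfalso
                  have hne : d' ≠ MQ := fun he => hdQ (by rw [he]; exact σ.symm' hMQσ)
                  exact hISO d' hdB hdQ
                    ⟨lt_of_le_of_lt hc1 h3, lt_of_le_of_ne h hne⟩
              have hdmem : d' ∈ BmQ.filter (fun r => MQ < r) :=
                Finset.mem_filter.mpr ⟨(hBmQmem d').mpr ⟨hdB, hdQ⟩, hd'gt⟩
              have hgtne : (BmQ.filter (fun r => MQ < r)).Nonempty := ⟨d', hdmem⟩
              have hs0eq : s0 = (BmQ.filter (fun r => MQ < r)).min' hgtne := by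
                rw [hs0, dif_pos hgtne]
              have hs0d : s0 ≤ d' := by rw [hs0eq]; exact Finset.min'_le _ d' hdmem
              have hs0gt : MQ < s0 := by
                rw [hs0eq]; exact (Finset.mem_filter.mp (Finset.min'_mem _ hgtne)).2
              have hs0nd : s0 ≠ d' := fun he => hdS (by rw [← he])
              have hbs0 : b' < s0 :=
                lt_of_lt_of_le hb'lt (le_trans hmQMQ (le_of_lt hs0gt))
              exact Or.inl (hσ a' b' s0 d' h1 hbs0 (lt_of_le_of_ne hs0d hs0nd) haP hbd)
          · rcases hCc with hcP | hcQ
            · -- a' ∈ Q, c' ∈ P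
              have ha1 : mQ ≤ a' := hmQle a' (σ.symm' haQ)
              have hb'gt : MQ < b' := by
                rcases lt_or_ge MQ b' with h | h
                · exact h
                · exfalso
                  have hne : b' ≠ MQ := fun he => hbQ (by rw [he]; exact σ.symm' hMQσ)
                  exact hISO b' hbB hbQ
                    ⟨lt_of_le_of_lt ha1 h1, lt_of_le_of_ne h hne⟩
              have hbmem : b' ∈ BmQ.filter (fun r => MQ < r) :=
                Finset.mem_filter.mpr ⟨(hBmQmem b').mpr ⟨hbB, hbQ⟩, hb'gt⟩
              have hgtne : (BmQ.filter (fun r => MQ < r)).Nonempty := ⟨b', hbmem⟩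
              have hs0eq : s0 = (BmQ.filter (fun r => MQ < r)).min' hgtne := by
                rw [hs0, dif_pos hgtne]
              have hs0b : s0 ≤ b' := by rw [hs0eq]; exact Finset.min'_le _ b' hbmem
              have hs0nb : s0 ≠ b' := fun he => hbS (by rw [← he])
              exfalso
              have := hσ s0 b' c' d' (lt_of_le_of_ne hs0b hs0nb) h2 h3 (σ.symm' hcP) hbd
              exact hbS (σ.symm' this)
            · exact Or.inl (hσ a' b' c' d' h1 h2 h3 (σ.trans' haQ (σ.symm' hcQ)) hbd)
      · exact Or.inr ⟨hCa, hCb⟩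
  exact ⟨ρ', a, b, hab, hpp, hρNC, hσle, hρτ, hcard⟩

lemma conj_swap_isSwap (u t : Perm (Fin n)) (h : t.IsSwap) : (u⁻¹ * t * u).IsSwap := by
  obtain ⟨x, y, hxy, rfl⟩ := h
  refine ⟨u⁻¹ x, u⁻¹ y, fun hc => hxy (u⁻¹.injective hc), ?_⟩
  have h2 := Equiv.swap_apply_apply u⁻¹ x y
  rw [inv_inv] at h2
  exact h2.symm

lemma conj_list_prod (u : Perm (Fin n)) (l : List (Perm (Fin n))) :
    (l.map (fun t => u⁻¹ * t * u)).prod = u⁻¹ * l.prod * u := by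
  induction l with
  | nil => simp
  | cons t l ih =>
      simp only [List.map_cons, List.prod_cons, ih]
      group

lemma bforward (hn : 0 < n) {τ : Setoid (Fin n)} (hτ : IsNoncrossing τ) {v : Perm (Fin n)}
    (hv : IsPiPerm τ v) :
    ∀ (k : ℕ) (σ : Setoid (Fin n)), Nat.card (Quotient σ) ≤ k → IsNoncrossing σ → σ ≤ τ →
      ∀ u : Perm (Fin n), IsPiPerm σ u →
      ∃ l : List (Perm (Fin n)), (∀ t ∈ l, t.IsSwap) ∧ l.prod * u = v ∧
        l.length + Nat.card (Quotient τ) ≤ Nat.card (Quotient σ) := by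
  intro k
  induction k with
  | zero =>
      intro σ hcard _ _ _ _
      exfalso
      haveI : Nonempty (Quotient σ) := ⟨Quotient.mk σ ⟨0, hn⟩⟩
      have : 0 < Nat.card (Quotient σ) := Nat.card_pos
      omega
  | succ k ih =>
      intro σ hcard hσNC hστ u hu
      by_cases heq : ∀ z w, τ z w → σ z w
      · have hστeq : σ = τ := le_antisymm hστ (fun z w h => heq z w h)
        subst hστeq
        have huv : u = v := pp_unique hu hv
        exact ⟨[], by simp, by simp [huv], by simp⟩
      · push_neg at heq
        obtain ⟨z0, w0, hzw, hnzw⟩ := heq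
        obtain ⟨ρ', a, b, hab, hpp, hρNC, hσρ, hρτ, hlt⟩ :=
          step_lemma hσNC hτ hστ hzw hnzw hu
        obtain ⟨l, hl1, hl2, hl3⟩ := ih ρ' (by omega) hρNC hρτ _ hpp
        refine ⟨l ++ [Equiv.swap a b], ?_, ?_, ?_⟩
        · intro t ht
          rcases List.mem_append.mp ht with h | h
          · exact hl1 t h
          · simp at h; subst h; exact ⟨a, b, hab, rfl⟩
        · rw [List.prod_append]
          simp only [List.prod_cons, List.prod_nil, mul_one]
          rw [mul_assoc]
          exact hl2
        · simp only [List.length_append, List.length_cons, List.length_nil]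
          omega

lemma abs_of_le (hn : 0 < n) {σ τ : Setoid (Fin n)} (hσ : IsNoncrossing σ)
    (hτ : IsNoncrossing τ) (hle : σ ≤ τ) {u v : Perm (Fin n)}
    (hu : IsPiPerm σ u) (hv : IsPiPerm τ v) : AbsoluteLe u v := by
  obtain ⟨l, hl1, hl2, hl3⟩ :=
    bforward hn hτ hv (Nat.card (Quotient σ)) σ le_rfl hσ hle u hu
  have hswaps : ∀ t ∈ l.map (fun t => u⁻¹ * t * u), t.IsSwap := by
    intro t ht
    obtain ⟨s, hs, rfl⟩ := List.mem_map.mp ht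
    exact conj_swap_isSwap u s (hl1 s hs)
  have hprod : (l.map (fun t => u⁻¹ * t * u)).prod = u⁻¹ * v := by
    rw [conj_list_prod, mul_assoc, hl2]
  have hlen : reflLength (u⁻¹ * v) ≤ l.length := by
    have := reflLength_le_length hswaps hprod
    simpa using this
  have h1 : reflLength u + Nat.card (Quotient σ) = n := by
    have := reflLength_add_orb u; rwa [pp_orb hu] at this
  have h2 : reflLength v + Nat.card (Quotient τ) = n := by
    have := reflLength_add_orb v; rwa [pp_orb hv] at this
  have h3 : reflLength v ≤ reflLength u + reflLength (u⁻¹ * v) := by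
    have := reflLength_mul_le u (u⁻¹ * v)
    rwa [mul_inv_cancel_left] at this
  show reflLength u + reflLength (u⁻¹ * v) = reflLength v
  omega

lemma le_of_abs {σ τ : Setoid (Fin n)} {u v : Perm (Fin n)}
    (hu : IsPiPerm σ u) (hv : IsPiPerm τ v) (h : AbsoluteLe u v) : σ ≤ τ := by
  classical
  obtain ⟨l, hl1, hl2, hl3⟩ := reflLength_spec (u⁻¹ * v)
  set k := l.length with hk
  set W : ℕ → Perm (Fin n) := fun j => u * (l.take j).prod with hW
  have hW0 : W 0 = u := by simp [hW]
  have hWk : W k = v := by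
    simp only [hW, hk, List.take_length]
    rw [hl2, mul_inv_cancel_left]
  have hstep : ∀ j, j < k → ∃ a b : Fin n, a ≠ b ∧ W (j+1) = W j * Equiv.swap a b := by
    intro j hj
    obtain ⟨a, b, hab, ht⟩ := hl1 (l[j]'hj) (List.getElem_mem hj)
    refine ⟨a, b, hab, ?_⟩
    have htake : l.take (j+1) = l.take j ++ [l[j]'hj] := by
      rw [List.take_succ, List.getElem?_eq_getElem hj]
      rfl
    simp only [hW, htake, List.prod_append, List.prod_cons, List.prod_nil, mul_one]
    rw [ht, mul_assoc]
  have key : ∀ d i, i + d ≤ k → orb (W i) ≤ orb (W (i + d)) + d := by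
    intro d
    induction d with
    | zero => intro i _; simp
    | succ d ihd =>
        intro i hi
        have hstep1 : orb (W i) ≤ orb (W (i+1)) + 1 := by
          obtain ⟨a, b, hab, he⟩ := hstep i (by omega)
          rw [he]
          exact orb_le_orb_mul_swap_add_one (W i) hab
        have h5 := ihd (i+1) (by omega)
        rw [show i + 1 + d = i + (d+1) by omega] at h5
        omega
  have horb0 : orb (W 0) = Nat.card (Quotient σ) := by rw [hW0, pp_orb hu]
  have horbk : orb (W k) = Nat.card (Quotient τ) := by rw [hWk, pp_orb hv]
  have h1 : reflLength u + Nat.card (Quotient σ) = n := by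
    have := reflLength_add_orb u; rwa [pp_orb hu] at this
  have h2 : reflLength v + Nat.card (Quotient τ) = n := by
    have := reflLength_add_orb v; rwa [pp_orb hv] at this
  have habs : reflLength u + reflLength (u⁻¹ * v) = reflLength v := h
  have hkval : k + Nat.card (Quotient τ) = Nat.card (Quotient σ) := by
    have : k = reflLength (u⁻¹ * v) := hl3
    omega
  have hST : ∀ j, j ≤ k → (scS u ≤ scS (W j) ∧ orb (W j) + j = Nat.card (Quotient σ)) := by
    intro j
    induction j with
    | zero =>
        intro _
        refine ⟨by rw [hW0], by simpa using horb0⟩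
    | succ j ihj =>
        intro hj
        obtain ⟨hle, heq⟩ := ihj (by omega)
        obtain ⟨a, b, hab, he⟩ := hstep j (by omega)
        by_cases hsc : (W j).SameCycle a b
        · exfalso
          have hle2 : scS (W (j+1)) ≤ scS (W j) := by
            rw [he]; exact scS_le_of_sameCycle hsc
          have hge : orb (W j) ≤ orb (W (j+1)) := card_quot_le_of_le hle2
          have hd := key (k - (j+1)) (j+1) (by omega)
          rw [show j + 1 + (k - (j+1)) = k by omega, horbk] at hd
          omega
        · have hle2 : scS (W j) ≤ scS (W (j+1)) := by
            rw [he]; exact scS_le_of_not_sameCycle hab hsc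
          have hscnew : (W (j+1)).SameCycle a b := by
            rw [he]; exact sameCycle_mul_swap hab hsc
          have hlt2 : orb (W (j+1)) < orb (W j) :=
            card_quot_lt hle2 (a := a) (b := b) hsc hscnew
          have hge2 : orb (W j) ≤ orb (W (j+1)) + 1 := by
            rw [he]; exact orb_le_orb_mul_swap_add_one (W j) hab
          exact ⟨le_trans hle hle2, by omega⟩
  obtain ⟨hfin, -⟩ := hST k le_rfl
  intro z z' hzz
  have h6 : scS u ≤ scS v := by rw [← hW0, ← hWk]; exact hfin
  have h7 : (scS v) z z' := h6 (by rw [pp_scS hu]; exact hzz)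
  rwa [pp_scS hv] at h7

lemma piperm_of_abs (hn : 0 < n) {x : Perm (Fin n)} (h : AbsoluteLe x (finRotate n)) :
    ∃ σ : Setoid (Fin n), IsNoncrossing σ ∧ IsPiPerm σ x := by
  classical
  have hctop : IsPiPerm (⊤ : Setoid (Fin n)) (finRotate n) := pp_top hn
  have horbc : orb (finRotate n) = 1 := by rw [pp_orb hctop, card_quot_top hn]
  have hlc : reflLength (finRotate n) + 1 = n := by
    have := reflLength_add_orb (finRotate n); rwa [horbc] at this
  obtain ⟨l, hl1, hl2, hl3⟩ := reflLength_spec (x⁻¹ * finRotate n)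
  set k := l.length with hk
  have habs : reflLength x + reflLength (x⁻¹ * finRotate n) = reflLength (finRotate n) := h
  have hl3' : reflLength (x⁻¹ * finRotate n) = k := hl3.symm
  set W : ℕ → Perm (Fin n) := fun j => x * (l.take j).prod with hW
  have hW0 : W 0 = x := by simp [hW]
  have hWk : W k = finRotate n := by
    simp only [hW, hk, List.take_length]
    rw [hl2, mul_inv_cancel_left]
  have hstep : ∀ j, j < k → ∃ a b : Fin n, a ≠ b ∧ W (j+1) = W j * Equiv.swap a b := by
    intro j hj
    obtain ⟨a, b, hab, ht⟩ := hl1 (l[j]'hj) (List.getElem_mem hj)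
    refine ⟨a, b, hab, ?_⟩
    have htake : l.take (j+1) = l.take j ++ [l[j]'hj] := by
      rw [List.take_succ, List.getElem?_eq_getElem hj]
      rfl
    simp only [hW, htake, List.prod_append, List.prod_cons, List.prod_nil, mul_one]
    rw [ht, mul_assoc]
  have hWlen : ∀ j, reflLength (W j) ≤ reflLength x + j := by
    intro j
    have h4 : ∀ t ∈ l.take j, t.IsSwap := fun t ht => hl1 t (List.mem_of_mem_take ht)
    have h5 : reflLength ((l.take j).prod) ≤ (l.take j).length :=
      reflLength_le_length h4 rfl
    have h6 : (l.take j).length ≤ j := by rw [List.length_take]; omega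
    have h7 := reflLength_mul_le x ((l.take j).prod)
    simp only [hW]
    omega
  have hmain : ∀ j, j ≤ k → ∃ ρ : Setoid (Fin n), IsNoncrossing ρ ∧
      IsPiPerm ρ (W (k - j)) ∧ orb (W (k - j)) = 1 + j := by
    intro j
    induction j with
    | zero =>
        intro _
        refine ⟨⊤, top_noncrossing, ?_, ?_⟩
        · rw [show k - 0 = k from rfl, hWk]; exact hctop
        · rw [show k - 0 = k from rfl, hWk]; simpa using horbc
    | succ j ihj =>
        intro hj
        obtain ⟨ρ, hρNC, hρpp, hρorb⟩ := ihj (by omega)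
        obtain ⟨a, b, hab, he⟩ := hstep (k - (j+1)) (by omega)
        rw [show k - (j+1) + 1 = k - j by omega] at he
        have hWi : W (k - (j+1)) = W (k - j) * Equiv.swap a b := by
          rw [he, mul_assoc]; simp
        by_cases hρab : ρ a b
        · have hsc : (W (k - j)).SameCycle a b := (pp_sameCycle_iff hρpp).mpr hρab
          have hle2 : scS (W (k - (j+1))) ≤ scS (W (k - j)) := by
            rw [hWi]; exact scS_le_of_sameCycle hsc
          have hge3 : orb (W (k - (j+1))) ≤ orb (W (k - j)) + 1 := by
            conv_rhs => rw [he]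
            exact orb_le_orb_mul_swap_add_one (W (k - (j+1))) hab
          obtain ⟨σ', hσ'NC, hσ'pp, hσ'nab⟩ : ∃ σ' : Setoid (Fin n), IsNoncrossing σ' ∧
              IsPiPerm σ' (W (k - (j+1))) ∧ ¬ (W (k - (j+1))).SameCycle a b := by
            rcases hab.lt_or_gt with hltab | hltab
            · obtain ⟨σ', h1', h2', h3'⟩ := split_lemma hρNC hρpp hltab hρab
              rw [← hWi] at h2'
              exact ⟨σ', h1', h2', fun hc => h3' ((pp_sameCycle_iff h2').mp hc)⟩
            · obtain ⟨σ', h1', h2', h3'⟩ := split_lemma hρNC hρpp hltab (ρ.symm' hρab)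
              rw [show W (k - j) * Equiv.swap b a = W (k - (j+1)) by
                rw [Equiv.swap_comm b a, ← hWi]] at h2'
              exact ⟨σ', h1', h2', fun hc => h3' ((pp_sameCycle_iff h2').mp hc.symm)⟩
          have hlt3 : orb (W (k - j)) < orb (W (k - (j+1))) :=
            card_quot_lt hle2 (a := a) (b := b) hσ'nab hsc
          exact ⟨σ', hσ'NC, hσ'pp, by omega⟩
        · exfalso
          have hnsc : ¬ (W (k - j)).SameCycle a b := fun hc =>
            hρab ((pp_sameCycle_iff hρpp).mp hc)
          have hle2 : scS (W (k - j)) ≤ scS (W (k - (j+1))) := by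
            rw [hWi]; exact scS_le_of_not_sameCycle hab hnsc
          have hsci : (W (k - (j+1))).SameCycle a b := by
            rw [hWi]; exact sameCycle_mul_swap hab hnsc
          have hlt3 : orb (W (k - (j+1))) < orb (W (k - j)) :=
            card_quot_lt hle2 (a := a) (b := b) hnsc hsci
          have hadd := reflLength_add_orb (W (k - (j+1)))
          have hlen := hWlen (k - (j+1))
          omega
  obtain ⟨ρ, hρNC, hρpp, -⟩ := hmain k le_rfl
  rw [show k - k = 0 by omega, hW0] at hρpp
  exact ⟨ρ, hρNC, hρpp⟩

end NCaux

open NCaux in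
/-- The map `σ ↦ π(σ)` is an order isomorphism from `NC_n` onto the set of
permutations below the `n`-cycle `(1, 2, …, n)` (here `finRotate n`) in absolute
order: it is injective, its image is exactly `{x : x ≤ c}`, and `σ ≤ τ` in `NC_n`
iff `π(σ) ≤ π(τ)` in absolute order. -/
theorem NC_orderIso_absolute_order (n : ℕ) (hn : 0 < n)
    (π : NC n → Equiv.Perm (Fin n)) (hπ : ∀ σ : NC n, IsPiPerm σ.val (π σ)) :
    Function.Injective π ∧
    Set.range π = {x : Equiv.Perm (Fin n) | AbsoluteLe x (finRotate n)} ∧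
    ∀ σ τ : NC n, σ ≤ τ ↔ AbsoluteLe (π σ) (π τ) := by
  refine ⟨?_, ?_, ?_⟩
  · intro σ τ h
    apply Subtype.ext
    apply Setoid.ext
    intro z w
    rw [← pp_sameCycle_iff (hπ σ), ← pp_sameCycle_iff (hπ τ), h]
  · ext x
    simp only [Set.mem_range, Set.mem_setOf_eq]
    constructor
    · rintro ⟨σ, rfl⟩
      have hletop : σ.val ≤ (⊤ : Setoid (Fin n)) := by
        intro z w _
        exact topRel z w
      exact abs_of_le hn σ.2 top_noncrossing hletop (hπ σ) (pp_top hn)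
    · intro h
      obtain ⟨σ, hσNC, hσpp⟩ := piperm_of_abs hn h
      exact ⟨⟨σ, hσNC⟩, pp_unique (hπ _) hσpp⟩
  · intro σ τ
    constructor
    · intro h
      exact abs_of_le hn σ.2 τ.2 h (hπ σ) (hπ τ)
    · intro h
      exact le_of_abs (hπ σ) (hπ τ) h
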